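/- Suppose f₁(x) = f(x) + f(1−x) is positive at every rational point of [0,1], and define a_p = Λ_p(1)^{-1/p}, so that Λ_p(a_p) = 1. If there are constants A > 0, B > 0, δ > 0 such that B ≤ a_p and |a_{p+1} − a_p| ≤ A/p^{2+δ} for all p ≥ 1, then the limit a_∞ = lim_{p→∞} a_p exists, a_∞ ≥ B > 0, and Λ_p(a_∞) → 1 as p → ∞; i.e., Λ_p(a_∞) is a separating solution. -/

import Mathlib

open Filter

/-- `Λ` is the family of sequences defined by the quadratic recurrence
`Λ_1(y) = y`, `Λ_{p+1}(y) = (1/p) ∑_{q=1}^p f(q/(p+1)) Λ_q(y) Λ_{p+1-q}(y)` for `p ≥ 1`. -/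
def IsLamSeq (f : ℝ → ℝ) (Λ : ℝ → ℕ → ℝ) : Prop :=
  (∀ y : ℝ, Λ y 1 = y) ∧
  ∀ y : ℝ, ∀ p : ℕ, 1 ≤ p →
    Λ y (p + 1) =
      (1 / (p : ℝ)) * ∑ q ∈ Finset.Icc 1 p,
        f ((q : ℝ) / ((p : ℝ) + 1)) * Λ y q * Λ y (p + 1 - q)

/-- Homogeneity: `Λ y p = y^p * Λ 1 p`. -/
lemma lam_hom {f : ℝ → ℝ} {Λ : ℝ → ℕ → ℝ} (hΛ : IsLamSeq f Λ) (y : ℝ) :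
    ∀ p : ℕ, 1 ≤ p → Λ y p = y ^ p * Λ 1 p := by
  intro p
  induction p using Nat.strong_induction_on with
  | _ p ih =>
    intro hp
    rcases Nat.lt_or_ge p 2 with h2 | h2
    · interval_cases p
      simp [hΛ.1]
    · obtain ⟨r, rfl⟩ : ∃ r, p = r + 1 := ⟨p - 1, by omega⟩
      have hr : 1 ≤ r := by omega
      rw [hΛ.2 y r hr, hΛ.2 1 r hr]
      have hsum : ∑ q ∈ Finset.Icc 1 r,
            f ((q : ℝ) / ((r : ℝ) + 1)) * Λ y q * Λ y (r + 1 - q)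
          = y ^ (r + 1) * ∑ q ∈ Finset.Icc 1 r,
            f ((q : ℝ) / ((r : ℝ) + 1)) * Λ 1 q * Λ 1 (r + 1 - q) := by
        rw [Finset.mul_sum]
        apply Finset.sum_congr rfl
        intro q hq
        simp only [Finset.mem_Icc] at hq
        rw [ih q (by omega) hq.1, ih (r + 1 - q) (by omega) (by omega)]
        have hy : y ^ q * y ^ (r + 1 - q) = y ^ (r + 1) := by
          rw [← pow_add]; congr 1; omega
        rw [← hy]; ring
      rw [hsum]; ring

/-- Positivity of `Λ 1 p` under the positivity hypothesis on `f₁`. -/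
lemma lam_pos {f : ℝ → ℝ} {Λ : ℝ → ℕ → ℝ} (hΛ : IsLamSeq f Λ)
    (hpos : ∀ q : ℚ, (q : ℝ) ∈ Set.Icc (0:ℝ) 1 → 0 < f (q : ℝ) + f (1 - (q : ℝ))) :
    ∀ p : ℕ, 1 ≤ p → 0 < Λ 1 p := by
  intro p
  induction p using Nat.strong_induction_on with
  | _ p ih =>
    intro hp
    rcases Nat.lt_or_ge p 2 with h2 | h2
    · interval_cases p
      simp [hΛ.1]
    · obtain ⟨r, rfl⟩ : ∃ r, p = r + 1 := ⟨p - 1, by omega⟩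
      have hr : 1 ≤ r := by omega
      have hr0 : (0:ℝ) < r := by exact_mod_cast hr
      rw [hΛ.2 1 r hr]
      set S := ∑ q ∈ Finset.Icc 1 r,
        f ((q : ℝ) / ((r : ℝ) + 1)) * Λ 1 q * Λ 1 (r + 1 - q) with hS
      have hswap : S = ∑ q ∈ Finset.Icc 1 r,
          f (1 - (q : ℝ) / ((r : ℝ) + 1)) * Λ 1 q * Λ 1 (r + 1 - q) := by
        rw [hS]
        apply Finset.sum_nbij' (fun q => r + 1 - q) (fun q => r + 1 - q)
        · intro a ha; simp only [Finset.mem_Icc] at *; omega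
        · intro a ha; simp only [Finset.mem_Icc] at *; omega
        · intro a ha; simp only [Finset.mem_Icc] at *; omega
        · intro a ha; simp only [Finset.mem_Icc] at *; omega
        · intro q hq
          simp only [Finset.mem_Icc] at hq
          have h1 : r + 1 - (r + 1 - q) = q := by omega
          have h2 : ((r + 1 - q : ℕ) : ℝ) = (r : ℝ) + 1 - q := by
            push_cast [Nat.cast_sub (by omega : q ≤ r + 1)]; ring
          have h3 : 1 - ((r + 1 - q : ℕ) : ℝ) / ((r : ℝ) + 1) = (q : ℝ) / ((r : ℝ) + 1) := by
            rw [h2]; field_simp; ring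
          rw [h1, h3]; ring
      have key : 0 < 2 * S := by
        have h2S : 2 * S = ∑ q ∈ Finset.Icc 1 r,
            (f ((q : ℝ) / ((r : ℝ) + 1)) + f (1 - (q : ℝ) / ((r : ℝ) + 1)))
              * (Λ 1 q * Λ 1 (r + 1 - q)) := by
          rw [two_mul]
          nth_rewrite 2 [hswap]
          rw [hS, ← Finset.sum_add_distrib]
          apply Finset.sum_congr rfl
          intro q _; ring
        rw [h2S]
        apply Finset.sum_pos
        · intro q hq
          simp only [Finset.mem_Icc] at hq
          have hx : ((((q : ℚ) / ((r : ℚ) + 1)) : ℚ) : ℝ) = (q : ℝ) / ((r : ℝ) + 1) := by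
            push_cast; ring
          have hmem : (((q : ℚ) / ((r : ℚ) + 1) : ℚ) : ℝ) ∈ Set.Icc (0:ℝ) 1 := by
            rw [hx]
            constructor
            · positivity
            · rw [div_le_one (by positivity)]
              have : (q : ℝ) ≤ (r : ℝ) := by exact_mod_cast hq.2
              linarith
          have hf := hpos _ hmem
          rw [hx] at hf
          have hq1 := ih q (by omega) hq.1
          have hq2 := ih (r + 1 - q) (by omega) (by omega)
          positivity
        · exact ⟨1, by simp [hr]⟩
      have hSpos : 0 < S := by linarith
      positivity

/-- Lipschitz-type bound for `log` on `[B, ∞)`. -/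
lemma log_lip {B x y : ℝ} (hB : 0 < B) (hx : B ≤ x) (hy : B ≤ y) :
    |Real.log x - Real.log y| ≤ |x - y| / B := by
  wlog h : y ≤ x generalizing x y
  · rw [abs_sub_comm, abs_sub_comm x y]
    exact this hy hx (le_of_not_ge h)
  have hy0 : 0 < y := lt_of_lt_of_le hB hy
  have hx0 : 0 < x := lt_of_lt_of_le hB hx
  rw [abs_of_nonneg (sub_nonneg.2 (Real.log_le_log hy0 h)),
    abs_of_nonneg (sub_nonneg.2 h), ← Real.log_div (ne_of_gt hx0) (ne_of_gt hy0)]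
  calc Real.log (x / y) ≤ x / y - 1 := Real.log_le_sub_one_of_pos (by positivity)
    _ = (x - y) / y := by field_simp
    _ ≤ (x - y) / B := by gcongr

theorem stmt17 (f : ℝ → ℝ) (hf : ContinuousOn f (Set.Icc 0 1))
    (hpos : ∀ q : ℚ, (q : ℝ) ∈ Set.Icc (0:ℝ) 1 → 0 < f (q : ℝ) + f (1 - (q : ℝ)))
    (Λ : ℝ → ℕ → ℝ) (hΛ : IsLamSeq f Λ)
    (a : ℕ → ℝ) (ha : ∀ p : ℕ, 1 ≤ p → a p = (Λ 1 p) ^ (-(1 : ℝ) / (p : ℝ)))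
    (A B δ : ℝ) (hA : 0 < A) (hB : 0 < B) (hδ : 0 < δ)
    (hineq : ∀ p : ℕ, 1 ≤ p →
      B ≤ a p ∧ |a (p + 1) - a p| ≤ A / (p : ℝ) ^ ((2 : ℝ) + δ)) :
    ∃ aInf : ℝ, Tendsto a atTop (nhds aInf) ∧ B ≤ aInf ∧
      Tendsto (fun p => Λ aInf p) atTop (nhds 1) := by
  have hLpos := lam_pos hΛ hpos
  -- the distance sequence
  set d : ℕ → ℝ := fun n => A * (1 / (((n + 1 : ℕ) : ℝ)) ^ ((2 : ℝ) + δ)) with hd_def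
  have hd : Summable d := by
    have hs : Summable (fun n : ℕ => 1 / ((n : ℝ)) ^ ((2 : ℝ) + δ)) :=
      Real.summable_one_div_nat_rpow.2 (by linarith)
    exact ((summable_nat_add_iff 1).2 hs).mul_left A
  have hdnn : ∀ n, 0 ≤ d n := by
    intro n
    have : (0:ℝ) < ((n + 1 : ℕ) : ℝ) := by positivity
    positivity
  have hdistd : ∀ n : ℕ, dist (a (n + 1)) (a (n + 1 + 1)) ≤ d n := by
    intro n
    have h := (hineq (n + 1) (by omega)).2
    rw [Real.dist_eq, abs_sub_comm]
    calc |a (n + 1 + 1) - a (n + 1)| ≤ A / ((n + 1 : ℕ) : ℝ) ^ ((2 : ℝ) + δ) := h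
      _ = d n := by simp only [hd_def, mul_one_div]
  obtain ⟨aInf, haInf⟩ := cauchySeq_tendsto_of_complete
    (cauchySeq_of_dist_le_of_summable d hdistd hd)
  have hta : Tendsto a atTop (nhds aInf) := (tendsto_add_atTop_iff_nat 1).1 haInf
  have hBa : B ≤ aInf :=
    ge_of_tendsto haInf (Eventually.of_forall fun n => (hineq (n + 1) (by omega)).1)
  have haInfpos : 0 < aInf := lt_of_lt_of_le hB hBa
  refine ⟨aInf, hta, hBa, ?_⟩
  -- `Λ 1 p = (a p ^ p)⁻¹`
  have hΛa : ∀ p : ℕ, 1 ≤ p → Λ 1 p = (a p ^ p)⁻¹ := by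
    intro p hp
    have hp0 : ((p : ℝ)) ≠ 0 := by positivity
    have hL := hLpos p hp
    have : a p ^ p = (Λ 1 p)⁻¹ := by
      rw [ha p hp, ← Real.rpow_natCast ((Λ 1 p) ^ (-(1:ℝ) / (p:ℝ))) p,
        ← Real.rpow_mul hL.le]
      have hexp : (-(1:ℝ) / (p:ℝ)) * (p : ℝ) = -1 := by field_simp
      rw [hexp, Real.rpow_neg_one]
    rw [this, inv_inv]
  have hapos : ∀ p : ℕ, 1 ≤ p → 0 < a p := fun p hp => lt_of_lt_of_le hB (hineq p hp).1
  -- formula for `Λ aInf (n+1)`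
  have hexpform : ∀ n : ℕ, Λ aInf (n + 1)
      = Real.exp (((n : ℝ) + 1) * Real.log (aInf / a (n + 1))) := by
    intro n
    have h1 : 1 ≤ n + 1 := by omega
    have hx : 0 < aInf / a (n + 1) := div_pos haInfpos (hapos _ h1)
    rw [lam_hom hΛ aInf (n + 1) h1, hΛa (n + 1) h1]
    have : aInf ^ (n + 1) * (a (n + 1) ^ (n + 1))⁻¹ = (aInf / a (n + 1)) ^ (n + 1) := by
      rw [div_pow, div_eq_mul_inv]
    rw [this, show ((n:ℝ) + 1) = ((n + 1 : ℕ) : ℝ) by push_cast; ring,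
      ← Real.log_pow, Real.exp_log (pow_pos hx _)]
  -- tail bound for the tsum
  have tail : ∀ n : ℕ, 1 ≤ n → (∑' m, d (n + m)) ≤ A * ((n : ℝ) + 1) ^ (-δ) / n := by
    intro n hn
    have hn0 : (0:ℝ) < n := by exact_mod_cast hn
    have hsumshift : Summable fun m => d (n + m) := by
      simpa [add_comm] using (summable_nat_add_iff n).2 hd
    apply Summable.tsum_le_of_sum_range_le hsumshift
    intro M
    have step : ∀ m : ℕ, d (n + m)
        ≤ A * ((n : ℝ) + 1) ^ (-δ) * (1 / ((n : ℝ) + m) - 1 / ((n : ℝ) + m + 1)) := by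
      intro m
      set k : ℝ := (n : ℝ) + m with hk
      have hk1 : (1:ℝ) ≤ k := by
        have : (1:ℝ) ≤ (n:ℝ) := by exact_mod_cast hn
        have : (0:ℝ) ≤ (m:ℝ) := by positivity
        simp only [hk]; linarith [show (1:ℝ) ≤ (n:ℝ) from by exact_mod_cast hn]
      have hk0 : (0:ℝ) < k := by linarith
      have hcast : ((n + m + 1 : ℕ) : ℝ) = k + 1 := by push_cast [hk]; ring
      have hrpow : (k + 1) ^ ((2:ℝ) + δ) = (k + 1) ^ (2:ℕ) * (k + 1) ^ δ := by
        rw [Real.rpow_add (by linarith), show (2:ℝ) = ((2:ℕ):ℝ) by norm_num,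
          Real.rpow_natCast]
      have hmono : ((n : ℝ) + 1) ^ δ ≤ (k + 1) ^ δ := by
        apply Real.rpow_le_rpow (by positivity) _ hδ.le
        have : (n:ℝ) ≤ k := by simp [hk]
        linarith
      have hlow : k * (k + 1) * ((n : ℝ) + 1) ^ δ ≤ (k + 1) ^ ((2:ℝ) + δ) := by
        rw [hrpow]
        have h1 : k * (k + 1) ≤ (k + 1) ^ (2:ℕ) := by nlinarith
        have h2 : (0:ℝ) ≤ ((n:ℝ) + 1) ^ δ := by positivity
        have h3 : (0:ℝ) ≤ k * (k + 1) := by positivity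
        calc k * (k + 1) * ((n : ℝ) + 1) ^ δ ≤ (k + 1) ^ (2:ℕ) * ((n : ℝ) + 1) ^ δ := by
              apply mul_le_mul_of_nonneg_right h1 h2
          _ ≤ (k + 1) ^ (2:ℕ) * (k + 1) ^ δ := by
              apply mul_le_mul_of_nonneg_left hmono (by positivity)
      have htel : 1 / k - 1 / (k + 1) = 1 / (k * (k + 1)) := by
        field_simp; ring
      simp only [hd_def, hcast]
      rw [htel]
      have hpow_pos : (0:ℝ) < (k + 1) ^ ((2:ℝ) + δ) := by positivity
      have hprod_pos : (0:ℝ) < k * (k + 1) * ((n : ℝ) + 1) ^ δ := by positivity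
      have hdiv : 1 / (k + 1) ^ ((2:ℝ) + δ) ≤ 1 / (k * (k + 1) * ((n : ℝ) + 1) ^ δ) :=
        one_div_le_one_div_of_le hprod_pos hlow
      calc A * (1 / (k + 1) ^ ((2:ℝ) + δ))
          ≤ A * (1 / (k * (k + 1) * ((n : ℝ) + 1) ^ δ)) := by
            apply mul_le_mul_of_nonneg_left hdiv hA.le
        _ = A * ((n : ℝ) + 1) ^ (-δ) * (1 / (k * (k + 1))) := by
            rw [Real.rpow_neg (by positivity)]
            field_simp
    calc ∑ m ∈ Finset.range M, d (n + m)
        ≤ ∑ m ∈ Finset.range M,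
            (A * ((n : ℝ) + 1) ^ (-δ) * (1 / ((n : ℝ) + m) - 1 / ((n : ℝ) + m + 1))) :=
          Finset.sum_le_sum fun m _ => step m
      _ = A * ((n : ℝ) + 1) ^ (-δ) *
            ∑ m ∈ Finset.range M,
              ((fun i : ℕ => 1 / ((n : ℝ) + i)) m - (fun i : ℕ => 1 / ((n : ℝ) + i)) (m + 1)) := by
          rw [← Finset.mul_sum]
          congr 1
          apply Finset.sum_congr rfl
          intro m _
          push_cast
          ring
      _ = A * ((n : ℝ) + 1) ^ (-δ) * (1 / ((n : ℝ) + 0) - 1 / ((n : ℝ) + M)) := by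
          rw [Finset.sum_range_sub' (fun i : ℕ => 1 / ((n : ℝ) + i)) M]
          norm_num
      _ ≤ A * ((n : ℝ) + 1) ^ (-δ) * (1 / (n : ℝ)) := by
          have h1 : (0:ℝ) ≤ A * ((n : ℝ) + 1) ^ (-δ) := by positivity
          have h2 : 1 / ((n : ℝ) + 0) - 1 / ((n : ℝ) + M) ≤ 1 / (n : ℝ) := by
            have : (0:ℝ) ≤ 1 / ((n : ℝ) + M) := by positivity
            simp only [add_zero]
            linarith
          exact mul_le_mul_of_nonneg_left h2 h1
      _ = A * ((n : ℝ) + 1) ^ (-δ) / n := by ring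
  -- the main limit: `(n+1) * log(aInf / a(n+1)) → 0`
  have hlog0 : Tendsto (fun n : ℕ => ((n : ℝ) + 1) * Real.log (aInf / a (n + 1)))
      atTop (nhds 0) := by
    apply squeeze_zero_norm' (a := fun n : ℕ => 2 * A / B * ((n : ℝ) + 1) ^ (-δ))
    · filter_upwards [eventually_ge_atTop 1] with n hn
      have hn0 : (0:ℝ) < n := by exact_mod_cast hn
      have h1 : 1 ≤ n + 1 := by omega
      have han : 0 < a (n + 1) := hapos _ h1
      have hBn : B ≤ a (n + 1) := (hineq (n + 1) h1).1
      set r : ℝ := ((n : ℝ) + 1) ^ (-δ) with hr_def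
      have hr : 0 ≤ r := by positivity
      have hlogb : |Real.log (aInf / a (n + 1))| ≤ |aInf - a (n + 1)| / B := by
        rw [Real.log_div (ne_of_gt haInfpos) (ne_of_gt han)]
        exact log_lip hB hBa hBn
      have hdistb : |aInf - a (n + 1)| ≤ A * r / n := by
        have h := dist_le_tsum_of_dist_le_of_tendsto (f := fun k => a (k + 1)) d hdistd hd haInf n
        rw [Real.dist_eq, abs_sub_comm] at h
        exact h.trans ((tail n hn).trans_eq (by rw [hr_def]))
      rw [Real.norm_eq_abs, abs_mul, abs_of_nonneg (by positivity : (0:ℝ) ≤ (n:ℝ) + 1)]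
      calc ((n : ℝ) + 1) * |Real.log (aInf / a (n + 1))|
          ≤ ((n : ℝ) + 1) * (A * r / n / B) := by
            apply mul_le_mul_of_nonneg_left _ (by positivity)
            exact hlogb.trans (by gcongr)
        _ = (A / B) * r * (((n : ℝ) + 1) / n) := by field_simp
        _ ≤ (A / B) * r * 2 := by
            apply mul_le_mul_of_nonneg_left _ (by positivity)
            rw [div_le_iff₀ hn0]
            have hn1 : (1:ℝ) ≤ (n:ℝ) := by exact_mod_cast hn
            linarith
        _ = 2 * A / B * r := by ring
    · have h1 : Tendsto (fun n : ℕ => ((n : ℝ) + 1)) atTop atTop :=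
        tendsto_atTop_add_const_right atTop 1 tendsto_natCast_atTop_atTop
      have h2 : Tendsto (fun n : ℕ => ((n : ℝ) + 1) ^ (-δ)) atTop (nhds 0) :=
        (tendsto_rpow_neg_atTop hδ).comp h1
      have := h2.const_mul (2 * A / B)
      simpa using this
  -- conclude
  have hshift : Tendsto (fun n : ℕ => Λ aInf (n + 1)) atTop (nhds 1) := by
    have hexp : Tendsto (fun n : ℕ =>
        Real.exp (((n : ℝ) + 1) * Real.log (aInf / a (n + 1)))) atTop (nhds 1) := by
      have := (Real.continuous_exp.tendsto 0).comp hlog0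
      simpa [Function.comp_def] using this
    exact hexp.congr fun n => (hexpform n).symm
  exact (tendsto_add_atTop_iff_nat 1).1 hshift
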